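/- Multi-dimensional Chebyshev integral inequality: let D ≥ 1 and let f, g : [0,1]^D → ℝ be bounded measurable functions such that for every coordinate i ∈ {1,…,D}, with the other variables held fixed, f and g are both non-decreasing in x_i or both non-increasing in x_i. Then ∫_{[0,1]^D} f g dλ ≥ (∫_{[0,1]^D} f dλ) · (∫_{[0,1]^D} g dλ), where λ is D-dimensional Lebesgue measure on the unit cube. -/

import Mathlib

open MeasureTheory

/-- The unit cube `[0,1]^D` as a subset of `Fin D → ℝ`. -/
def unitCube (D : ℕ) : Set (Fin D → ℝ) := {x | ∀ i, x i ∈ Set.Icc (0 : ℝ) 1}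

/-- The `D`-dimensional Lebesgue (product) probability measure on the unit cube. -/
noncomputable def cubeMeasure (D : ℕ) : Measure (Fin D → ℝ) :=
  Measure.pi fun _ => volume.restrict (Set.Icc (0 : ℝ) 1)

instance : IsProbabilityMeasure ((volume : Measure ℝ).restrict (Set.Icc (0:ℝ) 1)) := ⟨by simp⟩

instance (D : ℕ) : IsProbabilityMeasure (cubeMeasure D) := by
  unfold cubeMeasure; infer_instance

lemma unitCube_eq_pi (D : ℕ) :
    unitCube D = Set.univ.pi (fun _ : Fin D => Set.Icc (0:ℝ) 1) := by
  ext x; simp [unitCube, Set.mem_pi, Set.mem_Icc, forall_and, Pi.le_def]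

lemma measurableSet_unitCube (D : ℕ) : MeasurableSet (unitCube D) := by
  rw [unitCube_eq_pi]; exact MeasurableSet.univ_pi fun _ => measurableSet_Icc

lemma ae_mem_unitCube (D : ℕ) : ∀ᵐ x ∂cubeMeasure D, x ∈ unitCube D := by
  have h1 : cubeMeasure D (unitCube D) = 1 := by
    rw [unitCube_eq_pi, cubeMeasure, Measure.pi_pi]
    simp
  have h2 := (prob_compl_eq_zero_iff (measurableSet_unitCube D)).2 h1
  exact ae_iff.2 h2

lemma integrable_of_bdd {α : Type*} [MeasurableSpace α] {μ : Measure α} [IsFiniteMeasure μ]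
    {f : α → ℝ} (hf : Measurable f) {C : ℝ} (hC : ∀ x, |f x| ≤ C) : Integrable f μ :=
  ⟨hf.aestronglyMeasurable,
    HasFiniteIntegral.of_bounded (C := C) (ae_of_all _ (by simpa [Real.norm_eq_abs] using hC))⟩

/-- One-variable Chebyshev-type correlation inequality for an abstract probability measure. -/
lemma cheb_aux {α : Type*} [MeasurableSpace α] {μ : Measure α} [IsProbabilityMeasure μ]
    {f g : α → ℝ} (hf : Integrable f μ) (hg : Integrable g μ)
    (hfg : Integrable (fun x => f x * g x) μ)
    (h : ∀ᵐ x ∂μ, ∀ᵐ y ∂μ, 0 ≤ (f x - f y) * (g x - g y)) :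
    (∫ x, f x ∂μ) * (∫ x, g x ∂μ) ≤ ∫ x, f x * g x ∂μ := by
  set If := ∫ x, f x ∂μ with hIf
  set Ig := ∫ x, g x ∂μ with hIg
  set Ifg := ∫ x, f x * g x ∂μ with hIfg
  have inner_eq : ∀ x, ∫ y, (f x - f y) * (g x - g y) ∂μ
      = f x * g x - f x * Ig - g x * If + Ifg := by
    intro x
    have e1 : (fun y => (f x - f y) * (g x - g y))
        = fun y => f x * g x - f x * g y - g x * f y + f y * g y := by
      funext y; ring
    have i1 : Integrable (fun y => f x * g x - f x * g y) μ :=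
      (integrable_const _).sub (hg.const_mul _)
    have i2 : Integrable (fun y => f x * g x - f x * g y - g x * f y) μ :=
      i1.sub (hf.const_mul _)
    rw [e1, integral_add i2 hfg, integral_sub i1 (hf.const_mul _),
        integral_sub (integrable_const _) (hg.const_mul _),
        integral_const, integral_const_mul, integral_const_mul]
    simp [← hIf, ← hIg, ← hIfg]
  have inner_nonneg : ∀ᵐ x ∂μ, 0 ≤ f x * g x - f x * Ig - g x * If + Ifg := by
    filter_upwards [h] with x hx
    rw [← inner_eq x]
    exact integral_nonneg_of_ae hx
  have houter : 0 ≤ ∫ x, (f x * g x - f x * Ig - g x * If + Ifg) ∂μ :=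
    integral_nonneg_of_ae inner_nonneg
  have houter_eq : ∫ x, (f x * g x - f x * Ig - g x * If + Ifg) ∂μ
      = Ifg - If * Ig - Ig * If + Ifg := by
    have j1 : Integrable (fun x => f x * g x - f x * Ig) μ := hfg.sub (hf.mul_const _)
    have j2 : Integrable (fun x => f x * g x - f x * Ig - g x * If) μ := j1.sub (hg.mul_const _)
    rw [integral_add j2 (integrable_const _), integral_sub j1 (hg.mul_const _),
        integral_sub hfg (hf.mul_const _),
        integral_const, integral_mul_const, integral_mul_const]
    simp [← hIf, ← hIg, ← hIfg]
  rw [houter_eq] at houter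
  linarith

lemma cons_mem_unitCube {D : ℕ} {t : ℝ} {x : Fin D → ℝ}
    (ht : t ∈ Set.Icc (0:ℝ) 1) (hx : x ∈ unitCube D) : Fin.cons t x ∈ unitCube (D+1) := by
  intro k
  refine Fin.cases ?_ ?_ k
  · simpa using ht
  · intro j; simpa using hx j

lemma measurable_cons {D : ℕ} (t : ℝ) :
    Measurable (fun x : Fin D → ℝ => (Fin.cons t x : Fin (D+1) → ℝ)) := by
  apply measurable_pi_lambda
  intro k
  refine Fin.cases ?_ ?_ k
  · simpa using measurable_const
  · intro j; simpa using measurable_pi_apply j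

/-- The main inductive statement. -/
lemma chebB : ∀ (D : ℕ) (f g : (Fin D → ℝ) → ℝ), Measurable f → Measurable g →
    ∀ Cf : ℝ, (∀ x, |f x| ≤ Cf) → ∀ Cg : ℝ, (∀ x, |g x| ≤ Cg) →
    (∀ i : Fin D,
      ((∀ x y : Fin D → ℝ, x ∈ unitCube D → y ∈ unitCube D →
          (∀ j, j ≠ i → x j = y j) → x i ≤ y i → f x ≤ f y) ∧
        (∀ x y : Fin D → ℝ, x ∈ unitCube D → y ∈ unitCube D →
          (∀ j, j ≠ i → x j = y j) → x i ≤ y i → g x ≤ g y)) ∨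
      ((∀ x y : Fin D → ℝ, x ∈ unitCube D → y ∈ unitCube D →
          (∀ j, j ≠ i → x j = y j) → x i ≤ y i → f y ≤ f x) ∧
        (∀ x y : Fin D → ℝ, x ∈ unitCube D → y ∈ unitCube D →
          (∀ j, j ≠ i → x j = y j) → x i ≤ y i → g y ≤ g x))) →
    (∫ x, f x ∂cubeMeasure D) * (∫ x, g x ∂cubeMeasure D)
      ≤ ∫ x, f x * g x ∂cubeMeasure D := by
  intro D
  induction D with
  | zero =>
    intro f g _ _ _ _ _ _ _
    rw [integral_unique, integral_unique, integral_unique]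
    simp
  | succ D ih =>
    intro f g hfm hgm Cf hCf Cg hCg hmono
    set ν := (volume : Measure ℝ).restrict (Set.Icc (0:ℝ) 1) with hν
    have hCf0 : 0 ≤ Cf := le_trans (abs_nonneg _) (hCf (fun _ => 0))
    have hCg0 : 0 ≤ Cg := le_trans (abs_nonneg _) (hCg (fun _ => 0))
    have hmp : MeasurePreserving (MeasurableEquiv.piFinSuccAbove (fun _ : Fin (D+1) => ℝ) 0)
        (cubeMeasure (D+1)) (ν.prod (cubeMeasure D)) :=
      measurePreserving_piFinSuccAbove (fun _ => ν) 0
    -- key conversion lemma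
    have key : ∀ (h : (Fin (D+1) → ℝ) → ℝ), Measurable h → ∀ C : ℝ, (∀ z, |h z| ≤ C) →
        Integrable (fun p : ℝ × (Fin D → ℝ) => h (Fin.cons p.1 p.2)) (ν.prod (cubeMeasure D)) ∧
        ∫ z, h z ∂cubeMeasure (D+1) = ∫ t, ∫ x, h (Fin.cons t x) ∂cubeMeasure D ∂ν := by
      intro h hm C hC
      have hsymm : ∀ p : ℝ × (Fin D → ℝ),
          (MeasurableEquiv.piFinSuccAbove (fun _ : Fin (D+1) => ℝ) 0).symm p
            = Fin.cons p.1 p.2 := by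
        intro p
        simp [MeasurableEquiv.piFinSuccAbove_symm_apply, Fin.insertNthEquiv_zero, Fin.consEquiv]
      have hcmeas : Measurable (fun p : ℝ × (Fin D → ℝ) => (Fin.cons p.1 p.2 : Fin (D+1) → ℝ)) := by
        have := (MeasurableEquiv.piFinSuccAbove (fun _ : Fin (D+1) => ℝ) 0).symm.measurable
        convert this using 1
        funext p; rw [hsymm p]
      have hint : Integrable (fun p : ℝ × (Fin D → ℝ) => h (Fin.cons p.1 p.2))
          (ν.prod (cubeMeasure D)) :=
        integrable_of_bdd (hm.comp hcmeas) (fun p => hC _)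
      refine ⟨hint, ?_⟩
      have h1 : ∫ p, h ((MeasurableEquiv.piFinSuccAbove (fun _ : Fin (D+1) => ℝ) 0).symm p)
            ∂(ν.prod (cubeMeasure D)) = ∫ z, h z ∂cubeMeasure (D+1) :=
        (MeasurePreserving.symm _ hmp).integral_comp
          (MeasurableEquiv.piFinSuccAbove (fun _ : Fin (D+1) => ℝ) 0).symm.measurableEmbedding h
      have h2 : (fun p : ℝ × (Fin D → ℝ) =>
          h ((MeasurableEquiv.piFinSuccAbove (fun _ : Fin (D+1) => ℝ) 0).symm p))
          = fun p => h (Fin.cons p.1 p.2) := by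
        funext p; rw [hsymm p]
      rw [h2] at h1
      rw [← h1, MeasureTheory.integral_prod _ hint]
    obtain ⟨hfI, hfE⟩ := key f hfm Cf hCf
    obtain ⟨hgI, hgE⟩ := key g hgm Cg hCg
    have hCfg : ∀ z, |f z * g z| ≤ Cf * Cg := fun z => by
      rw [abs_mul]; exact mul_le_mul (hCf z) (hCg z) (abs_nonneg _) hCf0
    obtain ⟨hpI, hpE⟩ := key (fun z => f z * g z) (hfm.mul hgm) (Cf * Cg) hCfg
    set F : ℝ → ℝ := fun t => ∫ x, f (Fin.cons t x) ∂cubeMeasure D with hF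
    set G : ℝ → ℝ := fun t => ∫ x, g (Fin.cons t x) ∂cubeMeasure D with hG
    set P : ℝ → ℝ := fun t => ∫ x, f (Fin.cons t x) * g (Fin.cons t x) ∂cubeMeasure D with hP
    have hFI : Integrable F ν := hfI.integral_prod_left
    have hGI : Integrable G ν := hgI.integral_prod_left
    have hPI : Integrable P ν := hpI.integral_prod_left
    have hFb : ∀ t, |F t| ≤ Cf := by
      intro t
      have := norm_integral_le_of_norm_le_const (μ := cubeMeasure D)
        (f := fun x => f (Fin.cons t x)) (C := Cf)
        (ae_of_all _ fun x => by simpa [Real.norm_eq_abs] using hCf (Fin.cons t x))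
      simpa [Real.norm_eq_abs] using this
    have hFGI : Integrable (fun t => F t * G t) ν :=
      hGI.bdd_mul (c := Cf) hFI.aestronglyMeasurable (ae_of_all _ fun t => by
        simpa [Real.norm_eq_abs] using hFb t)
    -- fiberwise integrability on the cube
    have hftI : ∀ t : ℝ, Integrable (fun x => f (Fin.cons t x)) (cubeMeasure D) :=
      fun t => integrable_of_bdd (hfm.comp (measurable_cons t)) (fun x => hCf _)
    have hgtI : ∀ t : ℝ, Integrable (fun x => g (Fin.cons t x)) (cubeMeasure D) :=
      fun t => integrable_of_bdd (hgm.comp (measurable_cons t)) (fun x => hCg _)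
    -- transfer monotonicity to the fibers
    have hIH : ∀ t ∈ Set.Icc (0:ℝ) 1, F t * G t ≤ P t := by
      intro t ht
      refine ih (fun x => f (Fin.cons t x)) (fun x => g (Fin.cons t x))
        (hfm.comp (measurable_cons t)) (hgm.comp (measurable_cons t))
        Cf (fun x => hCf _) Cg (fun x => hCg _) ?_
      intro i
      have hagree : ∀ (x y : Fin D → ℝ), (∀ j, j ≠ i → x j = y j) →
          ∀ k : Fin (D+1), k ≠ i.succ → (Fin.cons t x : Fin (D+1) → ℝ) k = (Fin.cons t y : Fin (D+1) → ℝ) k := by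
        intro x y hxy k hk
        rcases Fin.eq_zero_or_eq_succ k with rfl | ⟨j, rfl⟩
        · simp
        · have hji : j ≠ i := fun hji => hk (by rw [hji])
          simp [hxy j hji]
      rcases hmono i.succ with ⟨h1, h2⟩ | ⟨h1, h2⟩
      · left
        constructor
        · intro x y hx hy hxy hle
          exact h1 _ _ (cons_mem_unitCube ht hx) (cons_mem_unitCube ht hy)
            (hagree x y hxy) (by simpa using hle)
        · intro x y hx hy hxy hle
          exact h2 _ _ (cons_mem_unitCube ht hx) (cons_mem_unitCube ht hy)
            (hagree x y hxy) (by simpa using hle)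
      · right
        constructor
        · intro x y hx hy hxy hle
          exact h1 _ _ (cons_mem_unitCube ht hx) (cons_mem_unitCube ht hy)
            (hagree x y hxy) (by simpa using hle)
        · intro x y hx hy hxy hle
          exact h2 _ _ (cons_mem_unitCube ht hx) (cons_mem_unitCube ht hy)
            (hagree x y hxy) (by simpa using hle)
    -- monotonicity of F and G in t over [0,1], in matching directions
    have hagree0 : ∀ (s : ℝ) (x : Fin D → ℝ) (u : ℝ),
        ∀ k : Fin (D+1), k ≠ 0 → (Fin.cons s x : Fin (D+1) → ℝ) k = (Fin.cons u x : Fin (D+1) → ℝ) k := by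
      intro s x u k hk
      rcases Fin.eq_zero_or_eq_succ k with rfl | ⟨j, rfl⟩
      · exact absurd rfl hk
      · simp
    have hcomono : ∀ t ∈ Set.Icc (0:ℝ) 1, ∀ s ∈ Set.Icc (0:ℝ) 1,
        0 ≤ (F t - F s) * (G t - G s) := by
      intro t ht s hs
      rcases hmono 0 with ⟨h1, h2⟩ | ⟨h1, h2⟩
      · have hmonF : ∀ a ∈ Set.Icc (0:ℝ) 1, ∀ b ∈ Set.Icc (0:ℝ) 1, a ≤ b →
            F a ≤ F b ∧ G a ≤ G b := by
          intro a ha b hb hab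
          constructor
          · refine integral_mono_ae (hftI a) (hftI b) ?_
            filter_upwards [ae_mem_unitCube D] with x hx
            exact h1 _ _ (cons_mem_unitCube ha hx) (cons_mem_unitCube hb hx)
              (hagree0 a x b) (by simpa using hab)
          · refine integral_mono_ae (hgtI a) (hgtI b) ?_
            filter_upwards [ae_mem_unitCube D] with x hx
            exact h2 _ _ (cons_mem_unitCube ha hx) (cons_mem_unitCube hb hx)
              (hagree0 a x b) (by simpa using hab)
        rcases le_total s t with hst | hst
        · obtain ⟨hF1, hG1⟩ := hmonF s hs t ht hst
          exact mul_nonneg (by linarith) (by linarith)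
        · obtain ⟨hF1, hG1⟩ := hmonF t ht s hs hst
          nlinarith
      · have hmonF : ∀ a ∈ Set.Icc (0:ℝ) 1, ∀ b ∈ Set.Icc (0:ℝ) 1, a ≤ b →
            F b ≤ F a ∧ G b ≤ G a := by
          intro a ha b hb hab
          constructor
          · refine integral_mono_ae (hftI b) (hftI a) ?_
            filter_upwards [ae_mem_unitCube D] with x hx
            exact h1 _ _ (cons_mem_unitCube ha hx) (cons_mem_unitCube hb hx)
              (hagree0 a x b) (by simpa using hab)
          · refine integral_mono_ae (hgtI b) (hgtI a) ?_
            filter_upwards [ae_mem_unitCube D] with x hx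
            exact h2 _ _ (cons_mem_unitCube ha hx) (cons_mem_unitCube hb hx)
              (hagree0 a x b) (by simpa using hab)
        rcases le_total s t with hst | hst
        · obtain ⟨hF1, hG1⟩ := hmonF s hs t ht hst
          nlinarith
        · obtain ⟨hF1, hG1⟩ := hmonF t ht s hs hst
          exact mul_nonneg (by linarith) (by linarith)
    have hae : ∀ᵐ t ∂ν, ∀ᵐ s ∂ν, 0 ≤ (F t - F s) * (G t - G s) := by
      filter_upwards [ae_restrict_mem measurableSet_Icc] with t ht
      filter_upwards [ae_restrict_mem measurableSet_Icc] with s hs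
      exact hcomono t ht s hs
    have step1 : (∫ t, F t ∂ν) * (∫ t, G t ∂ν) ≤ ∫ t, F t * G t ∂ν :=
      cheb_aux hFI hGI hFGI hae
    have step2 : ∫ t, F t * G t ∂ν ≤ ∫ t, P t ∂ν := by
      refine integral_mono_ae hFGI hPI ?_
      filter_upwards [ae_restrict_mem measurableSet_Icc] with t ht
      exact hIH t ht
    rw [hfE, hgE, hpE]
    exact le_trans step1 step2

/-- Multi-dimensional Chebyshev integral inequality: if the bounded measurable
functions `f, g : [0,1]^D → ℝ` are, in each coordinate separately (the others
held fixed), both non-decreasing or both non-increasing, then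
`∫ f·g ≥ (∫ f)·(∫ g)` over the unit cube. -/
theorem chebyshev_multidimensional_integral_inequality
    (D : ℕ) (hD : 1 ≤ D) (f g : (Fin D → ℝ) → ℝ)
    (hf_meas : Measurable f) (hg_meas : Measurable g)
    (hf_bdd : ∃ C : ℝ, ∀ x, |f x| ≤ C) (hg_bdd : ∃ C : ℝ, ∀ x, |g x| ≤ C)
    (hmono : ∀ i : Fin D,
      ((∀ x y : Fin D → ℝ, x ∈ unitCube D → y ∈ unitCube D →
          (∀ j, j ≠ i → x j = y j) → x i ≤ y i → f x ≤ f y) ∧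
        (∀ x y : Fin D → ℝ, x ∈ unitCube D → y ∈ unitCube D →
          (∀ j, j ≠ i → x j = y j) → x i ≤ y i → g x ≤ g y)) ∨
      ((∀ x y : Fin D → ℝ, x ∈ unitCube D → y ∈ unitCube D →
          (∀ j, j ≠ i → x j = y j) → x i ≤ y i → f y ≤ f x) ∧
        (∀ x y : Fin D → ℝ, x ∈ unitCube D → y ∈ unitCube D →
          (∀ j, j ≠ i → x j = y j) → x i ≤ y i → g y ≤ g x))) :
    ∫ x, f x * g x ∂(cubeMeasure D) ≥
      (∫ x, f x ∂(cubeMeasure D)) * (∫ x, g x ∂(cubeMeasure D)) := by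
  obtain ⟨Cf, hCf⟩ := hf_bdd
  obtain ⟨Cg, hCg⟩ := hg_bdd
  exact chebB D f g hf_meas hg_meas Cf hCf Cg hCg hmono
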